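/- With B₁, B₂, A₁, A₂ defined over a field K, if (σ₁, σ₂, σ₃, σ₄) ≠ (0, 0, 0, 0), then the c × (2c+2) block matrix β = (B₁ | B₂) has maximal rank c; that is, the associated linear map K^{2c+2} → K^c is surjective. -/

import Mathlib

open Matrix

/-- The `c × (c+1)` banded matrix with `σ₁` on the main diagonal and `σ₂` on the
superdiagonal: `(B₁)_{i,j} = σ₁` if `j = i`, `σ₂` if `j = i+1`, `0` otherwise. -/
def monadB {K : Type*} [Field K] (σ₁ σ₂ : K) (c : ℕ) :
    Matrix (Fin c) (Fin (c + 1)) K :=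
  Matrix.of fun i j =>
    if (j : ℕ) = (i : ℕ) then σ₁ else if (j : ℕ) = (i : ℕ) + 1 then σ₂ else 0

lemma monadB_mulVec_surj {K : Type*} [Field K] (σ₁ σ₂ : K) (c : ℕ)
    (h : σ₁ ≠ 0 ∨ σ₂ ≠ 0) :
    Function.Surjective (Matrix.mulVecLin (monadB σ₁ σ₂ c)) := by
  rcases h with h | h
  · set T : Matrix (Fin c) (Fin c) K := fun i j => monadB σ₁ σ₂ c i j.castSucc with hT
    have hTu : T.BlockTriangular id := by
      intro i j hij
      have hij' : (j : ℕ) < (i : ℕ) := hij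
      simp only [hT, monadB, of_apply, Fin.coe_castSucc]
      rw [if_neg (by omega), if_neg (by omega)]
    have hdiag : ∀ i, T i i = σ₁ := fun i => by simp [hT, monadB]
    have hdet : IsUnit T.det := by
      rw [Matrix.det_of_upperTriangular hTu,
        Finset.prod_congr rfl fun i _ => hdiag i, Finset.prod_const]
      exact isUnit_iff_ne_zero.mpr (pow_ne_zero _ h)
    intro y
    refine ⟨fun k => Fin.lastCases 0 (fun m => (T⁻¹ *ᵥ y) m) k, ?_⟩
    funext i
    have hTT : T * T⁻¹ = 1 := Matrix.mul_nonsing_inv T hdet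
    calc (Matrix.mulVecLin (monadB σ₁ σ₂ c))
            (fun k => Fin.lastCases 0 (fun m => (T⁻¹ *ᵥ y) m) k) i
        = ∑ k : Fin (c + 1), monadB σ₁ σ₂ c i k *
            Fin.lastCases 0 (fun m => (T⁻¹ *ᵥ y) m) k := by
          simp [Matrix.mulVecLin_apply, Matrix.mulVec, dotProduct]
      _ = ∑ m : Fin c, T i m * (T⁻¹ *ᵥ y) m := by
          rw [Fin.sum_univ_castSucc]
          simp [hT]
      _ = (T *ᵥ (T⁻¹ *ᵥ y)) i := by simp [Matrix.mulVec, dotProduct]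
      _ = y i := by rw [Matrix.mulVec_mulVec, hTT, Matrix.one_mulVec]
  · set T : Matrix (Fin c) (Fin c) K := fun i j => monadB σ₁ σ₂ c i j.succ with hT
    have hTl : T.BlockTriangular OrderDual.toDual := by
      intro i j hij
      have hij' : (i : ℕ) < (j : ℕ) := hij
      simp only [hT, monadB, of_apply, Fin.val_succ]
      rw [if_neg (by omega), if_neg (by omega)]
    have hdiag : ∀ i, T i i = σ₂ := fun i => by
      simp [hT, monadB]
    have hdet : IsUnit T.det := by
      rw [Matrix.det_of_lowerTriangular T hTl,
        Finset.prod_congr rfl fun i _ => hdiag i, Finset.prod_const]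
      exact isUnit_iff_ne_zero.mpr (pow_ne_zero _ h)
    intro y
    refine ⟨fun k => Fin.cases 0 (fun m => (T⁻¹ *ᵥ y) m) k, ?_⟩
    funext i
    have hTT : T * T⁻¹ = 1 := Matrix.mul_nonsing_inv T hdet
    calc (Matrix.mulVecLin (monadB σ₁ σ₂ c))
            (fun k => Fin.cases 0 (fun m => (T⁻¹ *ᵥ y) m) k) i
        = ∑ k : Fin (c + 1), monadB σ₁ σ₂ c i k *
            Fin.cases 0 (fun m => (T⁻¹ *ᵥ y) m) k := by
          simp [Matrix.mulVecLin_apply, Matrix.mulVec, dotProduct]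
      _ = ∑ m : Fin c, T i m * (T⁻¹ *ᵥ y) m := by
          rw [Fin.sum_univ_succ]
          simp [hT]
      _ = (T *ᵥ (T⁻¹ *ᵥ y)) i := by simp [Matrix.mulVec, dotProduct]
      _ = y i := by rw [Matrix.mulVec_mulVec, hTT, Matrix.one_mulVec]

/-- if `(σ₁, σ₂, σ₃, σ₄) ≠ (0, 0, 0, 0)`, then the `c × (2c+2)`
block matrix `β = (B₁ | B₂)` has maximal rank `c`; that is, the associated
linear map `K^{2c+2} → K^c` is surjective. -/
theorem monad_beta_surjective {K : Type*} [Field K] (σ₁ σ₂ σ₃ σ₄ : K)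
    (h : (σ₁, σ₂, σ₃, σ₄) ≠ (0, 0, 0, 0)) (c : ℕ) (hc : 1 ≤ c) :
    Function.Surjective
      (Matrix.mulVecLin
        (Matrix.fromCols (monadB σ₁ σ₂ c) (monadB σ₃ σ₄ c))) := by
  have key : (σ₁ ≠ 0 ∨ σ₂ ≠ 0) ∨ (σ₃ ≠ 0 ∨ σ₄ ≠ 0) := by
    by_contra hcon
    push_neg at hcon
    exact h (by simp [hcon.1.1, hcon.1.2, hcon.2.1, hcon.2.2])
  intro y
  rcases key with hk | hk
  · obtain ⟨x, hx⟩ := monadB_mulVec_surj σ₁ σ₂ c hk y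
    refine ⟨Sum.elim x 0, ?_⟩
    rw [Matrix.mulVecLin_apply, Matrix.fromCols_mulVec_sumElim]
    simp [← hx, Matrix.mulVecLin_apply]
  · obtain ⟨x, hx⟩ := monadB_mulVec_surj σ₃ σ₄ c hk y
    refine ⟨Sum.elim 0 x, ?_⟩
    rw [Matrix.mulVecLin_apply, Matrix.fromCols_mulVec_sumElim]
    simp [← hx, Matrix.mulVecLin_apply]
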